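/- Let R be a commutative noetherian ring, M an R-module, and W a specialization closed subset of Spec(R). Then Ass_R(M/Γ_W(M)) ⊆ Ass_R(M). -/

import Mathlib

universe u v

lemma mem_supp_span_singleton_iff
    {R : Type u} [CommRing R] {M : Type v} [AddCommGroup M] [Module R M]
    (y : M) (q : PrimeSpectrum R) :
    q ∈ Module.support R ↥(Submodule.span R ({y} : Set M)) ↔
      (Submodule.span R ({y} : Set M)).annihilator ≤ q.asIdeal := by
  rw [Module.mem_support_iff_of_finite]

/-- For a specialization closed subset `W ⊆ Spec R` and the submodule
`Γ_W(M) = {x ∈ M | Supp(Rx) ⊆ W}`, one has `Ass(M/Γ_W(M)) ⊆ Ass(M)`. -/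
theorem associatedPrimes_quotient_gamma_subset
    {R : Type u} [CommRing R] [IsNoetherianRing R]
    (W : Set (PrimeSpectrum R))
    (hW : ∀ p q : PrimeSpectrum R, p ∈ W → p.asIdeal ≤ q.asIdeal → q ∈ W)
    (M : Type v) [AddCommGroup M] [Module R M]
    (G : Submodule R M)
    (hG : ∀ x : M, x ∈ G ↔ Module.support R ↥(Submodule.span R ({x} : Set M)) ⊆ W) :
    associatedPrimes R (M ⧸ G) ⊆ associatedPrimes R M := by
  rintro P hPa
  obtain ⟨hP, xb, rfl⟩ := isAssociatedPrime_iff.mp hPa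
  rw [Submodule.bot_colon'] at hP ⊢
  obtain ⟨x, rfl⟩ := Submodule.Quotient.mk_surjective G xb
  set P : Ideal R := (Submodule.span R {Submodule.Quotient.mk (p := G) x}).annihilator with hPdef
  -- membership in P
  have hPmem : ∀ r : R, r ∈ P ↔ r • x ∈ G := by
    intro r
    rw [hPdef, Submodule.mem_annihilator_span_singleton, ← Submodule.Quotient.mk_smul,
      Submodule.Quotient.mk_eq_zero]
  -- the prime spectrum point
  set pP : PrimeSpectrum R := ⟨P, hP⟩ with hpPdef
  -- Step 1 : pP ∉ W
  have hxG : x ∉ G := by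
    intro hx
    have : P = ⊤ := by
      rw [hPdef, Submodule.annihilator_eq_top_iff, Submodule.span_singleton_eq_bot,
        Submodule.Quotient.mk_eq_zero]
      exact hx
    exact hP.ne_top this
  have hpPW : pP ∉ W := by
    intro hmem
    apply hxG
    rw [hG]
    intro q hq
    rw [mem_supp_span_singleton_iff] at hq
    by_cases hle : P ≤ q.asIdeal
    · exact hW pP q hmem hle
    · obtain ⟨a, haP, haq⟩ := SetLike.not_le_iff_exists.mp hle
      have haxG : a • x ∈ G := (hPmem a).mp haP
      have hsupp := (hG (a • x)).mp haxG
      apply hsupp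
      rw [mem_supp_span_singleton_iff]
      intro r hr
      rw [Submodule.mem_annihilator_span_singleton] at hr
      have : r * a ∈ (Submodule.span R ({x} : Set M)).annihilator := by
        rw [Submodule.mem_annihilator_span_singleton, mul_smul]
        exact hr
      have hrq : r * a ∈ q.asIdeal := hq this
      exact (q.isPrime.mem_or_mem hrq).resolve_right haq
  -- Step 2 : find s ∉ P with s • (a • x) = 0 for each generator a of P
  obtain ⟨s, hs⟩ : P.FG := IsNoetherian.noetherian P
  have hchoice : ∀ a : R, a ∈ P → ∃ c : R, c ∉ P ∧ c • (a • x) = 0 := by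
    intro a haP
    have haxG : a • x ∈ G := (hPmem a).mp haP
    have hsupp := (hG (a • x)).mp haxG
    have : pP ∉ Module.support R ↥(Submodule.span R ({a • x} : Set M)) :=
      fun h => hpPW (hsupp h)
    rw [mem_supp_span_singleton_iff] at this
    obtain ⟨c, hc1, hc2⟩ := SetLike.not_le_iff_exists.mp this
    rw [Submodule.mem_annihilator_span_singleton] at hc1
    exact ⟨c, hc2, hc1⟩
  choose c hc1 hc2 using hchoice
  -- product of the chosen elements over generators
  classical
  set t : R := ∏ a ∈ s.attach, c a (hs ▸ Submodule.subset_span a.2) with htdef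
  have htP : t ∉ P := by
    have : t ∈ P.primeCompl := Submonoid.prod_mem _ (fun a _ => hc1 _ _)
    exact this
  refine isAssociatedPrime_iff.mpr ⟨hP, t • x, ?_⟩
  rw [Submodule.bot_colon']
  apply le_antisymm
  · -- P ≤ Ann(t • x)
    intro r hr
    rw [Submodule.mem_annihilator_span_singleton]
    have hr' : r ∈ Ideal.span (s : Set R) := hs ▸ hr
    clear hr
    induction hr' using Submodule.span_induction with
    | mem a ha =>
      -- a ∈ s; t contains the factor c a killing a • x
      have haS : (⟨a, ha⟩ : {x // x ∈ s}) ∈ s.attach := Finset.mem_attach _ _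
      have hfac := Finset.prod_erase_mul s.attach
        (fun b => c b (hs ▸ Submodule.subset_span b.2)) haS
      have : a • t • x = 0 := by
        rw [smul_comm, htdef, ← hfac, mul_smul,
          hc2 a (hs ▸ Submodule.subset_span ha), smul_zero]
      exact this
    | zero => rw [zero_smul]
    | add y z _ _ hy hz => rw [add_smul, hy, hz, add_zero]
    | smul r y _ hy => rw [smul_assoc, hy, smul_zero]
  · -- Ann(t • x) ≤ P
    intro r hr
    rw [Submodule.mem_annihilator_span_singleton] at hr
    have : r * t ∈ P := by
      rw [hPmem, mul_smul]
      have : r • t • x = 0 := hr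
      rw [this]
      exact Submodule.zero_mem G
    exact (hP.mem_or_mem this).resolve_right htP
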